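/- Let $p$ and $q$ be real polynomials of degree at most $d$, and let $S \subset [-\ell, \ell]$ be a $\delta$-separated set of points with $|S| \geq 2d+1$. Suppose $\sup_{x \in S} |p(x)^2 - q(x)^2| \leq \gamma$ and $\inf_{x \in S} |q(x)| \geq K > 0$. Then the leading coefficients satisfy $||p_d| - |q_d|| \leq 2^{2d+1} e^{2d} (d\delta)^{-d} K^{-1} \gamma$. -/

import Mathlib

open Real Polynomial

section SqMethodAuxSec
open Finset

lemma SqMethodAux.prod_natdist (n i : ℕ) (hi : i ≤ n) :
    ∏ j ∈ (range (n+1)).erase i, (if j < i then i - j else j - i)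
      = i.factorial * (n - i).factorial := by
  have hsplit : (range (n+1)).erase i = range i ∪ Ico (i+1) (n+1) := by
    ext k
    simp only [mem_erase, mem_range, mem_union, mem_Ico]
    omega
  have hdisj : Disjoint (range i) (Ico (i+1) (n+1)) := by
    rw [Finset.disjoint_left]
    intro k hk hk'
    simp only [mem_range] at hk
    simp only [mem_Ico] at hk'
    omega
  rw [hsplit, Finset.prod_union hdisj]
  congr 1
  · calc ∏ j ∈ range i, (if j < i then i - j else j - i)
        = ∏ j ∈ range i, ((i - 1 - j) + 1) := by
          refine Finset.prod_congr rfl fun j hj => ?_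
          have := mem_range.mp hj
          simp only [if_pos this]; omega
      _ = ∏ j ∈ range i, (j + 1) := Finset.prod_range_reflect (fun j => j + 1) i
      _ = i.factorial := Finset.prod_range_add_one_eq_factorial i
  · have h1 : n + 1 - (i + 1) = n - i := by omega
    calc ∏ j ∈ Ico (i+1) (n+1), (if j < i then i - j else j - i)
        = ∏ k ∈ range (n + 1 - (i+1)), (if i+1+k < i then i - (i+1+k) else i+1+k - i) :=
          Finset.prod_Ico_eq_prod_range _ _ _
      _ = ∏ k ∈ range (n - i), (k + 1) := by
          rw [h1]
          refine Finset.prod_congr rfl fun k _ => ?_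
          rw [if_neg (by omega)]
          omega
      _ = (n - i).factorial := Finset.prod_range_add_one_eq_factorial _

lemma SqMethodAux.sep_sum (n : ℕ) (δ : ℝ) (hδ : 0 < δ) (s : Finset ℝ) (hcard : s.card = n + 1)
    (hsep : ∀ x ∈ s, ∀ y ∈ s, x ≠ y → δ ≤ |x - y|) :
    ∑ y ∈ s, ∏ j ∈ s.erase y, |y - j|⁻¹ ≤ 2 ^ n / (n.factorial * δ ^ n) := by
  set e := s.orderIsoOfFin hcard with he
  set x : Fin (n+1) → ℝ := fun k => (e k : ℝ) with hx
  have hmono : StrictMono x := fun a b h => by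
    have := e.strictMono h
    exact_mod_cast this
  have hinj : Function.Injective x := hmono.injective
  have hxs : ∀ k, x k ∈ s := fun k => (e k).2
  have hsurj : ∀ y ∈ s, ∃ k, x k = y := by
    intro y hy
    obtain ⟨k, hk⟩ := e.surjective ⟨y, hy⟩
    exact ⟨k, congrArg Subtype.val hk⟩
  have hgap : ∀ m (a b : Fin (n+1)), (b:ℕ) = (a:ℕ) + m → (m:ℝ) * δ ≤ x b - x a := by
    intro m
    induction m with
    | zero =>
      intro a b h
      have : a = b := Fin.ext (by omega)
      simp [this]
    | succ k ih =>
      intro a b h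
      have hb := b.isLt
      have hc : (a:ℕ) + k < n + 1 := by omega
      have h1 := ih a ⟨(a:ℕ)+k, hc⟩ rfl
      have hlt : (⟨(a:ℕ)+k, hc⟩ : Fin (n+1)) < b := by
        rw [Fin.lt_def]; simp; omega
      have hxlt := hmono hlt
      have h2 := hsep (x b) (hxs b) (x ⟨(a:ℕ)+k, hc⟩) (hxs _) (ne_of_gt hxlt)
      rw [abs_of_pos (sub_pos.mpr hxlt)] at h2
      push_cast
      nlinarith
  have hfac : ∀ i j : Fin (n+1), j ≠ i →
      ((if (j:ℕ) < (i:ℕ) then (i:ℕ) - (j:ℕ) else (j:ℕ) - (i:ℕ) : ℕ) : ℝ) * δ ≤ |x i - x j| := by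
    intro i j hji
    rcases lt_or_gt_of_ne (fun h : (j:ℕ) = (i:ℕ) => hji (Fin.ext h)) with h | h
    · rw [if_pos h]
      have hg := hgap ((i:ℕ) - (j:ℕ)) j i (by omega)
      have hlt : x j < x i := hmono (by rwa [Fin.lt_def])
      rw [abs_of_pos (sub_pos.mpr hlt)]
      linarith
    · rw [if_neg (by omega)]
      have hg := hgap ((j:ℕ) - (i:ℕ)) i j (by omega)
      have hlt : x i < x j := hmono (by rwa [Fin.lt_def])
      rw [abs_of_neg (sub_neg.mpr hlt), neg_sub]
      linarith
  have hprodtrans : ∀ i : Fin (n+1),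
      ∏ j ∈ s.erase (x i), |x i - j| = ∏ j ∈ univ.erase i, |x i - x j| := by
    intro i
    refine (Finset.prod_bij (fun j (_ : j ∈ univ.erase i) => x j) ?_ ?_ ?_ ?_).symm
    · intro j hj
      exact mem_erase.mpr ⟨fun h => (mem_erase.mp hj).1 (hinj h), hxs j⟩
    · intro a _ b _ hab; exact hinj hab
    · intro y hy
      obtain ⟨k, hk⟩ := hsurj y (mem_erase.mp hy).2
      refine ⟨k, mem_erase.mpr ⟨?_, mem_univ k⟩, hk⟩
      rintro rfl
      exact (mem_erase.mp hy).1 hk.symm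
    · intro a _; rfl
  have hprodnat : ∀ i : Fin (n+1),
      ∏ j ∈ univ.erase i, (if (j:ℕ) < (i:ℕ) then (i:ℕ) - (j:ℕ) else (j:ℕ) - (i:ℕ))
        = (i:ℕ).factorial * (n - (i:ℕ)).factorial := by
    intro i
    rw [← SqMethodAux.prod_natdist n i (by omega)]
    refine Finset.prod_bij (fun j (_ : j ∈ univ.erase i) => (j:ℕ)) ?_ ?_ ?_ ?_
    · intro j hj
      exact mem_erase.mpr ⟨fun h => (mem_erase.mp hj).1 (Fin.ext h), mem_range.mpr j.isLt⟩
    · intro a _ b _ hab; exact Fin.ext hab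
    · intro k hk
      have hk' := mem_erase.mp hk
      have hkr := mem_range.mp hk'.2
      exact ⟨⟨k, hkr⟩, mem_erase.mpr ⟨fun h => hk'.1 (congrArg Fin.val h), mem_univ _⟩, rfl⟩
    · intro a _; rfl
  have hcard_erase : ∀ i : Fin (n+1), ((univ : Finset (Fin (n+1))).erase i).card = n := by
    intro i
    rw [card_erase_of_mem (mem_univ i), card_univ, Fintype.card_fin]
    omega
  have hlower : ∀ i : Fin (n+1),
      δ ^ n * (((i:ℕ).factorial * (n - (i:ℕ)).factorial : ℕ) : ℝ)
        ≤ ∏ j ∈ s.erase (x i), |x i - j| := by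
    intro i
    rw [hprodtrans i]
    calc (δ:ℝ) ^ n * (((i:ℕ).factorial * (n - (i:ℕ)).factorial : ℕ) : ℝ)
        = ∏ j ∈ univ.erase i,
            (((if (j:ℕ) < (i:ℕ) then (i:ℕ) - (j:ℕ) else (j:ℕ) - (i:ℕ) : ℕ):ℝ) * δ) := by
          rw [Finset.prod_mul_distrib, Finset.prod_const, hcard_erase i, ← Nat.cast_prod,
            hprodnat i]
          ring
      _ ≤ ∏ j ∈ univ.erase i, |x i - x j| := by
          refine Finset.prod_le_prod (fun j _ => by positivity) ?_
          intro j hj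
          exact hfac i j (mem_erase.mp hj).1
  have hsum : ∑ y ∈ s, ∏ j ∈ s.erase y, |y - j|⁻¹
      = ∑ i : Fin (n+1), ∏ j ∈ s.erase (x i), |x i - j|⁻¹ := by
    refine (Finset.sum_bij (fun i (_ : i ∈ univ) => x i) (fun i _ => hxs i) ?_ ?_ ?_).symm
    · intro a _ b _ hab; exact hinj hab
    · intro y hy; obtain ⟨k, hk⟩ := hsurj y hy; exact ⟨k, mem_univ k, hk⟩
    · intro a _; rfl
  rw [hsum]
  have step : ∀ i : Fin (n+1), ∏ j ∈ s.erase (x i), |x i - j|⁻¹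
      ≤ (n.choose (i:ℕ) : ℝ) / n.factorial * (δ ^ n)⁻¹ := by
    intro i
    rw [Finset.prod_inv_distrib]
    have h1 : (0:ℝ) < δ ^ n * (((i:ℕ).factorial * (n - (i:ℕ)).factorial : ℕ) : ℝ) := by
      positivity
    have h2 := inv_anti₀ h1 (hlower i)
    refine le_trans h2 ?_
    have hch := Nat.choose_mul_factorial_mul_factorial (Nat.lt_succ_iff.mp i.isLt)
    have hcast : ((((i:ℕ).factorial * (n - (i:ℕ)).factorial : ℕ)) : ℝ) * (n.choose (i:ℕ) : ℝ)
        = (n.factorial : ℝ) := by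
      push_cast [← hch]
      ring
    have hfpos : (0:ℝ) < ((((i:ℕ).factorial * (n - (i:ℕ)).factorial : ℕ)) : ℝ) := by positivity
    have hnfpos : (0:ℝ) < (n.factorial : ℝ) := by positivity
    rw [mul_inv, div_mul_eq_mul_div, le_div_iff₀ hnfpos, ← hcast]
    refine le_of_eq ?_
    field_simp
  calc ∑ i : Fin (n+1), ∏ j ∈ s.erase (x i), |x i - j|⁻¹
      ≤ ∑ i : Fin (n+1), (n.choose (i:ℕ) : ℝ) / n.factorial * (δ ^ n)⁻¹ :=
        Finset.sum_le_sum fun i _ => step i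
    _ = ∑ i : Fin (n+1), (n.choose (i:ℕ) : ℝ) * ((n.factorial:ℝ) * δ ^ n)⁻¹ := by
        refine Finset.sum_congr rfl fun i _ => ?_
        rw [mul_inv]
        ring
    _ = (∑ i : Fin (n+1), (n.choose (i:ℕ) : ℝ)) * ((n.factorial:ℝ) * δ ^ n)⁻¹ :=
        (Finset.sum_mul _ _ _).symm
    _ = 2 ^ n / (n.factorial * δ ^ n) := by
        rw [Fin.sum_univ_eq_sum_range (fun k => (n.choose k : ℝ)), ← Nat.cast_sum,
          Nat.sum_range_choose]
        push_cast
        rw [div_eq_mul_inv]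

lemma SqMethodAux.coeff_basis_top (s : Finset ℝ) (i : ℝ) (hi : i ∈ s) :
    (Lagrange.basis s id i).coeff (#s - 1) = ∏ j ∈ s.erase i, (i - j)⁻¹ := by
  have hinj : Set.InjOn id (s : Set ℝ) := Function.injective_id.injOn
  have hnd := Lagrange.natDegree_basis hinj hi
  rw [← hnd, Polynomial.coeff_natDegree, Lagrange.basis, Polynomial.leadingCoeff_prod]
  refine Finset.prod_congr rfl fun j hj => ?_
  have hij : (id i : ℝ) ≠ id j := fun h => (Finset.mem_erase.mp hj).1 (h.symm)
  rw [Lagrange.basisDivisor, Polynomial.leadingCoeff_mul, Polynomial.leadingCoeff_C,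
    (Polynomial.monic_X_sub_C _).leadingCoeff, mul_one]; rfl

lemma SqMethodAux.coeff_top_eq (s : Finset ℝ) (f : ℝ[X]) (hf : f.degree < #s) :
    f.coeff (#s - 1) = ∑ i ∈ s, f.eval i * ∏ j ∈ s.erase i, (i - j)⁻¹ := by
  have hinj : Set.InjOn id (s : Set ℝ) := Function.injective_id.injOn
  conv_lhs => rw [Lagrange.eq_interpolate hinj hf]
  rw [Lagrange.interpolate_apply, Polynomial.finset_sum_coeff]
  refine Finset.sum_congr rfl fun i hi => ?_
  rw [Polynomial.coeff_C_mul, SqMethodAux.coeff_basis_top s i hi, id]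

lemma SqMethodAux.coeff_bound (n : ℕ) (δ M : ℝ) (hδ : 0 < δ) (hM : 0 ≤ M) (f : ℝ[X]) (hf : f.natDegree ≤ n)
    (s : Finset ℝ) (hcard : s.card = n + 1)
    (hsep : ∀ x ∈ s, ∀ y ∈ s, x ≠ y → δ ≤ |x - y|)
    (hval : ∀ x ∈ s, |f.eval x| ≤ M) :
    |f.coeff n| ≤ M * (2 ^ n / (n.factorial * δ ^ n)) := by
  have hdeg : f.degree < (#s : ℕ) := by
    rw [hcard]
    calc f.degree ≤ (f.natDegree : WithBot ℕ) := Polynomial.degree_le_natDegree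
      _ < ((n + 1 : ℕ) : WithBot ℕ) := by exact_mod_cast Nat.lt_succ_of_le hf
  have hco := SqMethodAux.coeff_top_eq s f hdeg
  rw [hcard, Nat.add_sub_cancel] at hco
  rw [hco]
  calc |∑ i ∈ s, f.eval i * ∏ j ∈ s.erase i, (i - j)⁻¹|
      ≤ ∑ i ∈ s, |f.eval i * ∏ j ∈ s.erase i, (i - j)⁻¹| := Finset.abs_sum_le_sum_abs _ _
    _ ≤ ∑ i ∈ s, M * ∏ j ∈ s.erase i, |i - j|⁻¹ := by
        refine Finset.sum_le_sum fun i hi => ?_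
        rw [abs_mul]
        refine mul_le_mul (hval i hi) ?_ (abs_nonneg _) hM
        rw [Finset.abs_prod]
        refine le_of_eq (Finset.prod_congr rfl fun j _ => ?_)
        rw [abs_inv]
    _ = M * ∑ i ∈ s, ∏ j ∈ s.erase i, |i - j|⁻¹ := (Finset.mul_sum _ _ _).symm
    _ ≤ M * (2 ^ n / (n.factorial * δ ^ n)) :=
        mul_le_mul_of_nonneg_left (SqMethodAux.sep_sum n δ hδ s hcard hsep) hM

lemma SqMethodAux.pow_self_le_exp_mul_factorial (n : ℕ) :
    (n : ℝ) ^ n ≤ Real.exp n * n.factorial := by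
  induction n with
  | zero => simp
  | succ k ih =>
    rcases Nat.eq_zero_or_pos k with rfl | hk
    · simpa using Real.one_le_exp (by norm_num : (0:ℝ) ≤ (1:ℕ))
    · have hk' : (0:ℝ) < (k:ℝ) := by exact_mod_cast hk
      have h1 : ((k:ℝ) + 1) ^ k ≤ Real.exp 1 * (k:ℝ) ^ k := by
        have heq : ((k:ℝ) + 1) ^ k = (1 + 1/(k:ℝ)) ^ k * (k:ℝ) ^ k := by
          rw [← mul_pow]
          congr 1
          field_simp
        rw [heq]
        refine mul_le_mul_of_nonneg_right ?_ (by positivity)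
        have hb : (1 + 1/(k:ℝ)) ≤ Real.exp (1/(k:ℝ)) := by
          have := Real.add_one_le_exp (1/(k:ℝ))
          linarith
        calc (1 + 1/(k:ℝ)) ^ k ≤ Real.exp (1/(k:ℝ)) ^ k :=
              pow_le_pow_left₀ (by positivity) hb k
          _ = Real.exp ((k:ℕ) * (1/(k:ℝ))) := by
              rw [← Real.exp_nat_mul]
          _ = Real.exp 1 := by
              congr 1
              field_simp
      have hexps : (0:ℝ) < Real.exp 1 := Real.exp_pos 1
      calc ((k + 1 : ℕ) : ℝ) ^ (k + 1) = ((k:ℝ) + 1) * ((k:ℝ) + 1) ^ k := by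
            push_cast
            ring
        _ ≤ ((k:ℝ) + 1) * (Real.exp 1 * (k:ℝ) ^ k) :=
            mul_le_mul_of_nonneg_left h1 (by positivity)
        _ ≤ ((k:ℝ) + 1) * (Real.exp 1 * (Real.exp k * k.factorial)) := by
            refine mul_le_mul_of_nonneg_left (mul_le_mul_of_nonneg_left ih hexps.le) (by positivity)
        _ = Real.exp ((k:ℝ) + 1) * (((k:ℝ) + 1) * k.factorial) := by
            rw [Real.exp_add]
            ring
        _ = Real.exp ((k + 1 : ℕ) : ℝ) * ((k + 1).factorial : ℝ) := by
            push_cast [Nat.factorial_succ]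
            ring

/-- The square method for coefficient extraction: if `p²` approximates `q²` to within `γ` on a
`δ`-separated set `S ⊆ [-ℓ,ℓ]` of at least `2d+1` points, and `|q| ≥ K` on `S`, then the top
coefficients satisfy `||p_d| - |q_d|| ≤ 2^{2d+1} e^{2d} (dδ)^{-d} K⁻¹ γ`. -/
theorem square_method_coefficient_extraction
    (d : ℕ) (hd : 1 ≤ d) (ℓ δ γ K : ℝ) (hℓ : 0 < ℓ) (hδ : 0 < δ) (hγ : 0 < γ) (hK : 0 < K)
    (p q : Polynomial ℝ) (hp : p.natDegree ≤ d) (hq : q.natDegree ≤ d)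
    (S : Finset ℝ) (hScard : 2 * d + 1 ≤ S.card)
    (hSmem : ∀ x ∈ S, x ∈ Set.Icc (-ℓ) ℓ)
    (hSsep : ∀ x ∈ S, ∀ y ∈ S, x ≠ y → δ ≤ |x - y|)
    (happrox : ∀ x ∈ S, |p.eval x ^ 2 - q.eval x ^ 2| ≤ γ)
    (hlow : ∀ x ∈ S, K ≤ |q.eval x|) :
    |(|p.coeff d| - |q.coeff d|)| ≤
      2 ^ (2 * d + 1) * Real.exp (2 * d) * ((d : ℝ) * δ)⁻¹ ^ d * K⁻¹ * γ := by
  classical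
  set M : ℝ := γ / K with hM
  have hM0 : 0 ≤ M := by positivity
  -- pointwise dichotomy
  have hdich : ∀ z ∈ S, |(p - q).eval z| ≤ M ∨ |(p + q).eval z| ≤ M := by
    intro z hz
    set a : ℝ := (p - q).eval z with ha
    set b : ℝ := (p + q).eval z with hb
    have hab : |a| * |b| ≤ γ := by
      rw [← abs_mul]
      have : a * b = p.eval z ^ 2 - q.eval z ^ 2 := by
        rw [ha, hb, Polynomial.eval_sub, Polynomial.eval_add]
        ring
      rw [this]
      exact happrox z hz
    have hsum : 2 * K ≤ |a| + |b| := by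
      have h2q : b - a = 2 * q.eval z := by
        rw [ha, hb, Polynomial.eval_sub, Polynomial.eval_add]
        ring
      have : |b - a| ≤ |b| + |a| := abs_sub _ _
      rw [h2q, abs_mul] at this
      have := hlow z hz
      rw [abs_two] at *
      linarith [hlow z hz]
    rcases le_total |a| |b| with h | h
    · left
      have hbK : K ≤ |b| := by linarith
      have hbpos : 0 < |b| := lt_of_lt_of_le hK hbK
      rw [hM, le_div_iff₀ hK]
      calc |a| * K ≤ |a| * |b| := mul_le_mul_of_nonneg_left hbK (abs_nonneg a)
        _ ≤ γ := hab
    · right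
      have haK : K ≤ |a| := by linarith
      rw [hM, le_div_iff₀ hK]
      calc |b| * K ≤ |b| * |a| := mul_le_mul_of_nonneg_left haK (abs_nonneg b)
        _ ≤ γ := by rw [mul_comm]; exact hab
  set T1 : Finset ℝ := S.filter (fun z => |(p - q).eval z| ≤ M) with hT1
  set T2 : Finset ℝ := S.filter (fun z => |(p + q).eval z| ≤ M) with hT2
  have hcover : S ⊆ T1 ∪ T2 := by
    intro z hz
    rcases hdich z hz with h | h
    · exact Finset.mem_union_left _ (Finset.mem_filter.mpr ⟨hz, h⟩)
    · exact Finset.mem_union_right _ (Finset.mem_filter.mpr ⟨hz, h⟩)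
  have hcards : 2 * d + 1 ≤ T1.card + T2.card := by
    calc 2 * d + 1 ≤ S.card := hScard
      _ ≤ (T1 ∪ T2).card := Finset.card_le_card hcover
      _ ≤ T1.card + T2.card := Finset.card_union_le _ _
  -- choose r and the big filter set
  obtain ⟨r, Tb, hTbS, hTbval, hrdeg, hTbcard, habs⟩ :
      ∃ (r : ℝ[X]) (Tb : Finset ℝ), Tb ⊆ S ∧ (∀ z ∈ Tb, |r.eval z| ≤ M) ∧ r.natDegree ≤ d ∧
        d + 1 ≤ Tb.card ∧ |(|p.coeff d| - |q.coeff d|)| ≤ |r.coeff d| := by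
    rcases le_or_gt (d + 1) T1.card with h | h
    · refine ⟨p - q, T1, Finset.filter_subset _ _, fun z hz => (Finset.mem_filter.mp hz).2,
        le_trans (Polynomial.natDegree_sub_le p q) (by omega : max p.natDegree q.natDegree ≤ d), h, ?_⟩
      rw [Polynomial.coeff_sub]
      exact abs_abs_sub_abs_le_abs_sub _ _
    · have h2 : d + 1 ≤ T2.card := by omega
      refine ⟨p + q, T2, Finset.filter_subset _ _, fun z hz => (Finset.mem_filter.mp hz).2,
        le_trans (Polynomial.natDegree_add_le p q) (by omega : max p.natDegree q.natDegree ≤ d), h2, ?_⟩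
      rw [Polynomial.coeff_add]
      calc |(|p.coeff d| - |q.coeff d|)| = |(|p.coeff d| - |(-(q.coeff d))|)| := by rw [abs_neg]
        _ ≤ |p.coeff d - -q.coeff d| := abs_abs_sub_abs_le_abs_sub _ _
        _ = |p.coeff d + q.coeff d| := by ring_nf
  obtain ⟨T, hTsub, hTcard⟩ := Finset.exists_subset_card_eq hTbcard
  have hbound := SqMethodAux.coeff_bound d δ M hδ hM0 r hrdeg T hTcard
    (fun x hx y hy hxy => hSsep x (hTbS (hTsub hx)) y (hTbS (hTsub hy)) hxy)
    (fun x hx => hTbval x (hTsub hx))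
  refine le_trans habs (le_trans hbound ?_)
  -- numeric estimate
  have hdpos : (0:ℝ) < (d:ℝ) := by exact_mod_cast hd
  have hfacpos : (0:ℝ) < (d.factorial : ℝ) := by exact_mod_cast d.factorial_pos
  have hmain : (2:ℝ) ^ d / (d.factorial : ℝ) ≤ 2 ^ (2 * d + 1) * Real.exp (2 * d) / (d:ℝ) ^ d := by
    rw [div_le_div_iff₀ hfacpos (by positivity)]
    have h1 : ((d:ℝ)) ^ d ≤ Real.exp d * d.factorial := SqMethodAux.pow_self_le_exp_mul_factorial d
    have h2 : Real.exp (d:ℝ) ≤ Real.exp (2 * d) := by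
      rw [Real.exp_le_exp]
      push_cast
      linarith
    have h3 : (2:ℝ) ^ d ≤ 2 ^ (2 * d + 1) := pow_le_pow_right₀ (by norm_num) (by omega)
    calc (2:ℝ) ^ d * (d:ℝ) ^ d ≤ 2 ^ d * (Real.exp d * d.factorial) :=
          mul_le_mul_of_nonneg_left h1 (by positivity)
      _ ≤ 2 ^ (2 * d + 1) * (Real.exp (2 * d) * d.factorial) := by
          refine mul_le_mul h3 (mul_le_mul_of_nonneg_right h2 hfacpos.le) (by positivity) (by positivity)
      _ = 2 ^ (2 * d + 1) * Real.exp (2 * d) * d.factorial := by ring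
  calc M * (2 ^ d / (d.factorial * δ ^ d))
      = (2 ^ d / (d.factorial : ℝ)) * (γ * K⁻¹ * (δ ^ d)⁻¹) := by
        rw [hM]
        field_simp
    _ ≤ (2 ^ (2 * d + 1) * Real.exp (2 * d) / (d:ℝ) ^ d) * (γ * K⁻¹ * (δ ^ d)⁻¹) :=
        mul_le_mul_of_nonneg_right hmain (by positivity)
    _ = 2 ^ (2 * d + 1) * Real.exp (2 * d) * ((d : ℝ) * δ)⁻¹ ^ d * K⁻¹ * γ := by
        rw [mul_inv, mul_pow, inv_pow, inv_pow]
        field_simp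

end SqMethodAuxSec
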